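/- arXiv:2001.10909 — 2 statements merged into one kernel-verified Lean document; each statement's English description precedes it below -/
import Mathlib

section
/- For all y > 0, 4y K_0(2y) ≤ 2√π · y^{1/2} · e^{-2y}. -/
open Real

lemma one_add_sq_div_two_le_cosh (t : ℝ) (ht : 0 ≤ t) : 1 + t ^ 2 / 2 ≤ Real.cosh t := by
  have h : Real.cosh t = Real.cosh (2 * (t / 2)) := by ring_nf
  rw [h, Real.cosh_two_mul, Real.cosh_sq]
  have hs : t / 2 ≤ Real.sinh (t / 2) := Real.self_le_sinh_iff.2 (by linarith)
  nlinarith [sq_nonneg (Real.sinh (t/2) - t/2)]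

/-- Modified Bessel function of the second kind of order 0. -/
noncomputable def besselK0 (x : ℝ) : ℝ :=
  ∫ t in Set.Ioi (0 : ℝ), Real.exp (-x * Real.cosh t)

theorem density_upper_bound :
    ∀ y : ℝ, 0 < y →
      4 * y * besselK0 (2 * y) ≤ 2 * Real.sqrt π * Real.sqrt y * Real.exp (-2 * y) := by
  intro y hy
  have hK : besselK0 (2 * y) ≤ Real.exp (-2 * y) * (Real.sqrt (π / y) / 2) := by
    have hint : MeasureTheory.Integrable
        (fun t : ℝ => Real.exp (-2 * y) * Real.exp (-y * t ^ 2))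
        (MeasureTheory.volume.restrict (Set.Ioi 0)) :=
      ((integrable_exp_neg_mul_sq hy).const_mul _).restrict
    have hle : besselK0 (2 * y) ≤
        ∫ t in Set.Ioi (0 : ℝ), Real.exp (-2 * y) * Real.exp (-y * t ^ 2) := by
      rw [besselK0]
      refine MeasureTheory.integral_mono_of_nonneg ?_ hint ?_
      · filter_upwards with t using (Real.exp_pos _).le
      · filter_upwards [MeasureTheory.ae_restrict_mem measurableSet_Ioi] with t ht
        rw [← Real.exp_add]
        apply Real.exp_le_exp.2
        have := one_add_sq_div_two_le_cosh t (le_of_lt ht)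
        nlinarith
    calc besselK0 (2 * y) ≤ _ := hle
      _ = Real.exp (-2 * y) * (Real.sqrt (π / y) / 2) := by
          rw [MeasureTheory.integral_const_mul, integral_gaussian_Ioi]
  have hys : Real.sqrt y > 0 := Real.sqrt_pos.2 hy
  have hsq : Real.sqrt (π / y) = Real.sqrt π / Real.sqrt y := Real.sqrt_div pi_pos.le y
  have key : 4 * y * (Real.exp (-2 * y) * (Real.sqrt (π / y) / 2))
      = 2 * Real.sqrt π * Real.sqrt y * Real.exp (-2 * y) := by
    rw [hsq]
    have : y = Real.sqrt y * Real.sqrt y := (Real.mul_self_sqrt hy.le).symm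
    field_simp
    ring_nf
    rw [Real.sq_sqrt hy.le]
  calc 4 * y * besselK0 (2 * y) ≤ 4 * y * (Real.exp (-2 * y) * (Real.sqrt (π / y) / 2)) := by
        apply mul_le_mul_of_nonneg_left hK; linarith
    _ = _ := key
end

section
/- For a ≥ 0: ∫_0^∞ z^{−1/2} exp(−a/z − z) dz = √π · e^{−2√a}. -/
open Real MeasureTheory Set

private lemma psi_image (s : ℝ) (hs : 0 < s) :
    (fun t : ℝ => t - s / t) '' Ioi (0:ℝ) = univ := by
  ext u
  simp only [mem_univ, iff_true, mem_image]
  set r := Real.sqrt (u ^ 2 + 4 * s) with hr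
  have hr2 : r ^ 2 = u ^ 2 + 4 * s := Real.sq_sqrt (by positivity)
  have hrabs : |u| < r := by
    have h0 : 0 ≤ r := Real.sqrt_nonneg _
    nlinarith [sq_abs u, abs_nonneg u]
  set t := (u + r) / 2 with htdef
  have ht : 0 < t := by
    have := neg_abs_le u
    have : -u < r := lt_of_le_of_lt (by linarith [neg_abs_le u]) hrabs
    simp only [htdef]; linarith
  refine ⟨t, ht, ?_⟩
  have ht2 : t ^ 2 = u * t + s := by
    simp only [htdef]; field_simp; nlinarith
  field_simp
  linarith [ht2]

private lemma psi_deriv (s : ℝ) {t : ℝ} (ht : (0:ℝ) < t) :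
    HasDerivAt (fun t : ℝ => t - s / t) (1 + s / t ^ 2) t := by
  have h := ((hasDerivAt_inv ht.ne').const_mul s)
  have h2 := (hasDerivAt_id t).sub h
  have heq : (fun t : ℝ => t - s / t) = fun x => id x - s * x⁻¹ := by
    funext x; rw [div_eq_mul_inv, id]
  rw [heq, show 1 + s / t ^ 2 = 1 - s * -(t ^ 2)⁻¹ by
    rw [mul_neg, sub_neg_eq_add, div_eq_mul_inv]]
  exact h2

private lemma psi_injOn (s : ℝ) (hs : 0 ≤ s) :
    InjOn (fun t : ℝ => t - s / t) (Ioi (0:ℝ)) := by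
  have : StrictMonoOn (fun t : ℝ => t - s / t) (Ioi (0:ℝ)) := by
    intro x hx y hy hxy
    have hx' : (0:ℝ) < x := hx
    have hy' : (0:ℝ) < y := hy
    have h1 : s / y ≤ s / x := by gcongr
    simp only
    linarith
  exact this.injOn

private lemma glasser (s : ℝ) (hs : 0 < s) :
    ∫ t in Ioi (0:ℝ), Real.exp (-(t - s / t) ^ 2) = Real.sqrt π / 2 := by
  have hgauss : (∫ u : ℝ, Real.exp (-u ^ 2)) = Real.sqrt π := by
    simpa using integral_gaussian 1
  have hderiv : ∀ t ∈ Ioi (0:ℝ),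
      HasDerivWithinAt (fun t : ℝ => t - s / t) (1 + s / t ^ 2) (Ioi 0) t :=
    fun t ht => (psi_deriv s ht).hasDerivWithinAt
  have hsub : (∫ u : ℝ, Real.exp (-u ^ 2))
      = ∫ t in Ioi (0:ℝ), (1 + s / t ^ 2) * Real.exp (-(t - s / t) ^ 2) := by
    rw [← setIntegral_univ, ← psi_image s hs,
      integral_image_eq_integral_abs_deriv_smul measurableSet_Ioi hderiv
        (psi_injOn s hs.le)]
    refine setIntegral_congr_fun measurableSet_Ioi fun t ht => ?_
    have ht' : (0:ℝ) < t := ht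
    rw [smul_eq_mul, abs_of_pos (by positivity)]
  have hFi : IntegrableOn (fun t => (1 + s / t ^ 2) * Real.exp (-(t - s / t) ^ 2))
      (Ioi (0:ℝ)) := by
    have : IntegrableOn (fun u : ℝ => Real.exp (-u ^ 2)) univ := by
      rw [integrableOn_univ]
      simpa using integrable_exp_neg_mul_sq (by norm_num : (0:ℝ) < 1)
    rw [← psi_image s hs] at this
    rw [(integrableOn_image_iff_integrableOn_abs_deriv_smul measurableSet_Ioi hderiv
      (psi_injOn s hs.le) _)] at this
    refine this.congr_fun (fun t ht => ?_) measurableSet_Ioi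
    have ht' : (0:ℝ) < t := ht
    beta_reduce
    rw [smul_eq_mul, abs_of_pos (by positivity)]
  have hcont : ContinuousOn (fun t : ℝ => Real.exp (-(t - s / t) ^ 2)) (Ioi 0) := by
    fun_prop (disch := intro x hx; exact ne_of_gt hx)
  have hfi : IntegrableOn (fun t => Real.exp (-(t - s / t) ^ 2)) (Ioi (0:ℝ)) := by
    refine hFi.mono' (hcont.aestronglyMeasurable measurableSet_Ioi) ?_
    filter_upwards [ae_restrict_mem measurableSet_Ioi] with t ht
    have ht' : (0:ℝ) < t := ht
    rw [Real.norm_eq_abs, abs_of_pos (Real.exp_pos _)]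
    nlinarith [Real.exp_pos (-(t - s / t) ^ 2), sq_nonneg t, div_pos hs (pow_pos ht' 2)]
  have hgi : IntegrableOn (fun t => s / t ^ 2 * Real.exp (-(t - s / t) ^ 2))
      (Ioi (0:ℝ)) := by
    refine MeasureTheory.IntegrableOn.congr_fun (hFi.sub hfi)
      (fun t ht => by simp only [Pi.sub_apply]; ring) measurableSet_Ioi
  have hsub2 : (∫ t in Ioi (0:ℝ), Real.exp (-(t - s / t) ^ 2))
      = ∫ t in Ioi (0:ℝ), s / t ^ 2 * Real.exp (-(t - s / t) ^ 2) := by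
    have himg : (fun t : ℝ => s / t) '' Ioi (0:ℝ) = Ioi 0 := by
      ext z
      constructor
      · rintro ⟨t, ht, rfl⟩; exact div_pos hs ht
      · intro hz
        exact ⟨s / z, div_pos hs hz, by field_simp⟩
    have hder2 : ∀ t ∈ Ioi (0:ℝ),
        HasDerivWithinAt (fun t : ℝ => s / t) (-(s / t ^ 2)) (Ioi 0) t := by
      intro t ht
      have ht' : (0:ℝ) < t := ht
      have h := ((hasDerivAt_inv ht'.ne').const_mul s).hasDerivWithinAt (s := Ioi 0)
      have heq : (fun t : ℝ => s / t) = fun x => s * x⁻¹ := by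
        funext x; rw [div_eq_mul_inv]
      rw [heq, show -(s / t ^ 2) = s * -(t ^ 2)⁻¹ by
        rw [mul_neg, div_eq_mul_inv]]
      exact h
    have hinj : InjOn (fun t : ℝ => s / t) (Ioi (0:ℝ)) := by
      intro x hx y hy h
      have hx' : (0:ℝ) < x := hx
      have hy' : (0:ℝ) < y := hy
      simp only at h
      rw [div_eq_div_iff hx'.ne' hy'.ne'] at h
      have := mul_left_cancel₀ hs.ne' h
      linarith
    conv_lhs => rw [← himg]
    rw [integral_image_eq_integral_abs_deriv_smul measurableSet_Ioi hder2 hinj]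
    refine setIntegral_congr_fun measurableSet_Ioi fun t ht => ?_
    have ht' : (0:ℝ) < t := ht
    have hst : s / (s / t) = t := by field_simp
    rw [smul_eq_mul, abs_neg, abs_of_pos (by positivity), hst,
      show (s / t - t) = -(t - s / t) by ring, neg_sq]
  have hsplit : (∫ t in Ioi (0:ℝ), (1 + s / t ^ 2) * Real.exp (-(t - s / t) ^ 2))
      = (∫ t in Ioi (0:ℝ), Real.exp (-(t - s / t) ^ 2))
        + ∫ t in Ioi (0:ℝ), s / t ^ 2 * Real.exp (-(t - s / t) ^ 2) := by
    rw [← integral_add hfi hgi]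
    exact setIntegral_congr_fun measurableSet_Ioi fun t ht => by ring
  rw [hsub, hsplit, ← hsub2] at hgauss
  linarith

private lemma sq_image' : (fun t : ℝ => t ^ 2) '' Ioi (0:ℝ) = Ioi 0 := by
  ext z
  constructor
  · rintro ⟨t, ht, rfl⟩; exact pow_pos (mem_Ioi.mp ht) 2
  · intro hz; exact ⟨Real.sqrt z, Real.sqrt_pos.2 hz, Real.sq_sqrt hz.le⟩

private lemma step1 (a : ℝ) :
    ∫ z in Ioi (0:ℝ), z ^ (-(1 : ℝ) / 2) * Real.exp (-a / z - z)
      = ∫ t in Ioi (0:ℝ), 2 * Real.exp (-a / t ^ 2 - t ^ 2) := by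
  have hder : ∀ t ∈ Ioi (0:ℝ),
      HasDerivWithinAt (fun t : ℝ => t ^ 2) (2 * t) (Ioi 0) t := by
    intro t ht
    simpa using ((hasDerivAt_pow 2 t).hasDerivWithinAt (s := Ioi 0))
  have hinj : InjOn (fun t : ℝ => t ^ 2) (Ioi (0:ℝ)) := fun x hx y hy h =>
    (sq_eq_sq₀ (le_of_lt hx) (le_of_lt hy)).mp h
  conv_lhs => rw [← sq_image']
  rw [integral_image_eq_integral_abs_deriv_smul measurableSet_Ioi hder hinj]
  refine setIntegral_congr_fun measurableSet_Ioi fun t ht => ?_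
  have ht' : (0:ℝ) < t := ht
  have h1 : (t ^ 2 : ℝ) ^ (-(1 : ℝ) / 2) = t⁻¹ := by
    rw [neg_div, Real.rpow_neg (sq_nonneg t), ← Real.sqrt_eq_rpow,
      Real.sqrt_sq ht'.le]
  rw [h1, smul_eq_mul, abs_of_pos (by positivity : (0:ℝ) < 2 * t)]
  field_simp

theorem integral_inv_sqrt_exp :
    ∀ a : ℝ, 0 ≤ a →
      ∫ z in Set.Ioi (0 : ℝ), z ^ (-(1 : ℝ) / 2) * Real.exp (-a / z - z)
        = Real.sqrt π * Real.exp (-2 * Real.sqrt a) := by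
  intro a ha
  rcases eq_or_lt_of_le ha with h0 | hpos
  · subst h0
    rw [Real.sqrt_zero, mul_zero, neg_zero, Real.exp_zero, mul_one]
    have := Real.Gamma_eq_integral (by norm_num : (0:ℝ) < 1/2)
    rw [Real.Gamma_one_half_eq] at this
    rw [this]
    refine setIntegral_congr_fun measurableSet_Ioi fun z hz => ?_
    norm_num [mul_comm]
  · set s := Real.sqrt a with hsdef
    have hs : 0 < s := Real.sqrt_pos.2 hpos
    have hs2 : s ^ 2 = a := Real.sq_sqrt ha
    rw [step1]
    have key : ∀ t ∈ Ioi (0:ℝ),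
        2 * Real.exp (-a / t ^ 2 - t ^ 2)
          = 2 * Real.exp (-2 * s) * Real.exp (-(t - s / t) ^ 2) := by
      intro t ht
      have ht' : (0:ℝ) < t := ht
      rw [mul_assoc, ← Real.exp_add]
      congr 2
      field_simp
      nlinarith [hs2]
    rw [setIntegral_congr_fun measurableSet_Ioi key, integral_const_mul,
      glasser s hs]
    ring
end
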